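/- With notation as above, for each fixed t with 1 ≤ t ≤ n, the cardinality of {u : (t,u) ∈ A} equals sp(t) + sp(t+1) + ... + sp(n), where A = {(a,b) : 2(p_a + r_b) > ω} and sp is the split index function. -/

import Mathlib

/-- The `i`-th split index, as in the paper. -/
noncomputable def splitIndex (n n' : ℕ) (p : Fin n → ℤ) (r : Fin n' → ℤ) (ω : ℤ)
    (i : Fin (n + 1)) : ℕ :=
  Nat.card {u : Fin n' //
    (∀ h : i.val < n, 2 * p ⟨i.val, h⟩ - ω < -2 * r u) ∧
    (∀ _ : 0 < i.val, -2 * r u < 2 * p ⟨i.val - 1, by have := i.isLt; omega⟩ - ω)}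

lemma aux_key {n : ℕ} (g : Fin n → ℤ) (hg : StrictAnti g) (x : ℤ) (a : Fin n) :
    x < g a ↔ a.val < (Finset.univ.filter (fun b => x < g b)).card := by
  constructor
  · intro hxa
    have hsub : Finset.Iic a ⊆ Finset.univ.filter (fun b => x < g b) := by
      intro b hb
      simp only [Finset.mem_Iic] at hb
      simp only [Finset.mem_filter, Finset.mem_univ, true_and]
      exact lt_of_lt_of_le hxa (hg.antitone hb)
    have := Finset.card_le_card hsub
    rw [Fin.card_Iic] at this
    omega
  · intro hc
    by_contra hxa
    have hsub : Finset.univ.filter (fun b => x < g b) ⊆ Finset.Iio a := by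
      intro b hb
      simp only [Finset.mem_filter, Finset.mem_univ, true_and] at hb
      simp only [Finset.mem_Iio]
      by_contra hba
      exact hxa (lt_of_lt_of_le hb (hg.antitone (le_of_not_gt hba)))
    have := Finset.card_le_card hsub
    rw [Fin.card_Iio] at this
    omega

theorem stmt_3 (n n' : ℕ) (p : Fin n → ℤ) (r : Fin n' → ℤ)
    (hp : StrictAnti p) (hr : StrictAnti r) (ω : ℤ)
    (h : ∀ a b, 2 * (p a + r b) ≠ ω) (t : Fin n) :
    Nat.card {u : Fin n' // 2 * (p t + r u) > ω} =
      ∑ j ∈ Finset.univ.filter (fun j : Fin (n + 1) => t.val + 1 ≤ j.val),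
        splitIndex n n' p r ω j := by
  classical
  set g : Fin n → ℤ := fun a => 2 * p a - ω with hgdef
  have hg : StrictAnti g := fun a b hab => by
    simp only [hgdef]
    have := hp hab
    omega
  set x : Fin n' → ℤ := fun u => -2 * r u with hxdef
  have hx : ∀ u a, x u ≠ g a := by
    intro u a heq
    exact h a u (by simp only [hxdef, hgdef] at heq; omega)
  set c : Fin n' → ℕ := fun u => (Finset.univ.filter (fun b => x u < g b)).card with hcdef
  have key : ∀ u (a : Fin n), x u < g a ↔ a.val < c u := fun u a => aux_key g hg (x u) a
  have hcn : ∀ u, c u ≤ n := by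
    intro u
    have := Finset.card_filter_le Finset.univ (fun b => x u < g b)
    simpa using this
  set f : Fin n' → Fin (n + 1) := fun u => ⟨c u, by have := hcn u; omega⟩ with hfdef
  have hmem : ∀ u : Fin n', 2 * (p t + r u) > ω ↔ x u < g t := by
    intro u; simp only [hxdef, hgdef]; constructor <;> intro <;> omega
  rw [Nat.card_eq_fintype_card, Fintype.card_subtype]
  rw [Finset.card_eq_sum_card_fiberwise (f := f)
      (t := Finset.univ.filter (fun j : Fin (n + 1) => t.val + 1 ≤ j.val))
      (by
        intro u hu
        simp only [Finset.mem_coe, Finset.mem_filter, Finset.mem_univ, true_and] at hu ⊢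
        have : x u < g t := (hmem u).1 hu
        have := (key u t).1 this
        simpa [hfdef] using this)]
  apply Finset.sum_congr rfl
  intro j hj
  simp only [Finset.mem_filter, Finset.mem_univ, true_and] at hj
  rw [splitIndex, Nat.card_eq_fintype_card, Fintype.card_subtype, Finset.filter_filter]
  congr 1
  apply Finset.filter_congr
  intro u _
  simp only [hfdef, Fin.ext_iff]
  constructor
  · rintro ⟨hu, hcu⟩
    have hcu' : c u = j.val := hcu
    refine ⟨fun hjn => ?_, fun hj0 => ?_⟩
    · have : ¬ x u < g ⟨j.val, hjn⟩ := by
        rw [key]; show ¬ (j.val < c u); omega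
      exact lt_of_le_of_ne (le_of_not_gt this) (fun e => hx u ⟨j.val, hjn⟩ e.symm)
    · rw [key]; show j.val - 1 < c u; omega
  · rintro ⟨h1, h2⟩
    have hj0 : 0 < j.val := by omega
    have hcu : c u = j.val := by
      have hge : j.val ≤ c u := by
        have h' : j.val - 1 < c u := (key u ⟨j.val - 1, by have := j.isLt; omega⟩).1 (h2 hj0)
        omega
      have hle : c u ≤ j.val := by
        by_cases hjn : j.val < n
        · have : ¬ x u < g ⟨j.val, hjn⟩ := not_lt.2 (le_of_lt (h1 hjn))
          rw [key] at this
          have h' : ¬ (j.val < c u) := this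
          omega
        · have := hcn u; omega
      omega
    refine ⟨(hmem u).2 ?_, hcu⟩
    rw [key]; show t.val < c u; omega
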